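/- Let A be a bounded A∞-algebra over a ground ring of characteristic 2, let M = ({M^i}_{i∈I}, {F^{i<i'}}) be an I-filtered A∞-module over A, and let P = ({P^j}_{j∈J}, {h¹_{j<j'}}) be a J-filtered type D structure over A, where I and J are finite partially ordered sets. Assume that at least one of M or P is bounded, so that the box tensor product M ⊠ P is defined. Then M ⊠ P = ⊕_{(i,j)∈I×J} M^i ⊗ P^j, equipped with the structure maps D^{i×j < i'×j'} defined by summing over all chains j = j₀ < … < j_n = j' the compositions which iterate δ on the P^{j_m}, interleave the morphisms h¹_{j_m<j_{m+1}}, and feed all resulting algebra outputs into F^{i≤i'} (where F^{i≤i'} is the A∞-action m^i when i = i'), is naturally an I×J-filtered chain complex. -/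

import Mathlib

open scoped Classical

set_option linter.unusedSectionVars false

namespace BoxTensorAux

lemma char2 {V : Type*} [AddCommGroup V] [Module (ZMod 2) V] (x : V) : x + x = 0 := by
  have h : (2 : ZMod 2) • x = x + x := two_smul _ x
  rw [show (2 : ZMod 2) = 0 by decide, zero_smul] at h
  exact h.symm

lemma eq_of_add_eq_zero2 {V : Type*} [AddCommGroup V] [Module (ZMod 2) V] {x y : V}
    (h : x + y = 0) : x = y := by
  calc x = x + (y + y) := by rw [char2, add_zero]
  _ = (x + y) + y := by abel
  _ = y := by rw [h, zero_add]

lemma telescope2 {V : Type*} [AddCommGroup V] [Module (ZMod 2) V] (c : ℕ → V) :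
    ∀ K : ℕ, ∑ k ∈ Finset.range K, (c (k + 1) + c k) = c K + c 0
  | 0 => by simpa using (char2 (c 0)).symm
  | (K + 1) => by
      rw [Finset.sum_range_succ, telescope2 c K]
      have h : (c K + c 0) + (c (K + 1) + c K) = (c (K + 1) + c 0) + (c K + c K) := by abel
      rw [h, char2, add_zero]

lemma ite_sum_zero {V : Type*} [AddCommMonoid V] {γ : Type*} (c : Prop) [Decidable c]
    (s : Finset γ) (F : γ → V) :
    (if c then ∑ x ∈ s, F x else 0) = ∑ x ∈ s, (if c then F x else 0) := by
  split <;> simp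

lemma push_if_sum {V : Type*} [AddCommMonoid V] {σ : Type*} [Fintype σ] (k : ℕ) (G : σ → Prop)
    [DecidablePred G] (F : σ → ℕ → V) :
    (∑ s : σ, if G s then ∑ t ∈ Finset.range k, F s t else 0)
      = ∑ t ∈ Finset.range k, ∑ s : σ, if G s then F s t else 0 := by
  rw [Finset.sum_comm]
  exact Finset.sum_congr rfl fun s _ => ite_sum_zero _ _ _

lemma sum_rot {V : Type*} [AddCommMonoid V] {α β γ : Type*} (sa : Finset α) (sb : Finset β)
    (sc : Finset γ) (F : α → β → γ → V) :
    ∑ a ∈ sa, ∑ b ∈ sb, ∑ c ∈ sc, F a b c = ∑ c ∈ sc, ∑ b ∈ sb, ∑ a ∈ sa, F a b c := by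
  calc ∑ a ∈ sa, ∑ b ∈ sb, ∑ c ∈ sc, F a b c
      = ∑ a ∈ sa, ∑ c ∈ sc, ∑ b ∈ sb, F a b c :=
        Finset.sum_congr rfl fun a _ => Finset.sum_comm
    _ = ∑ c ∈ sc, ∑ a ∈ sa, ∑ b ∈ sb, F a b c := Finset.sum_comm
    _ = ∑ c ∈ sc, ∑ b ∈ sb, ∑ a ∈ sa, F a b c :=
        Finset.sum_congr rfl fun c _ => Finset.sum_comm

lemma sum_rot3 {V : Type*} [AddCommMonoid V] {α β γ : Type*} (sa : Finset α) (sb : Finset β)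
    (sc : Finset γ) (F : α → β → γ → V) :
    ∑ a ∈ sa, ∑ b ∈ sb, ∑ c ∈ sc, F a b c = ∑ b ∈ sb, ∑ c ∈ sc, ∑ a ∈ sa, F a b c := by
  calc ∑ a ∈ sa, ∑ b ∈ sb, ∑ c ∈ sc, F a b c
      = ∑ b ∈ sb, ∑ a ∈ sa, ∑ c ∈ sc, F a b c := Finset.sum_comm
    _ = ∑ b ∈ sb, ∑ c ∈ sc, ∑ a ∈ sa, F a b c :=
        Finset.sum_congr rfl fun b _ => Finset.sum_comm

lemma sum_rot3' {V : Type*} [AddCommMonoid V] {α β : Type*} {γ : β → Type*} (sa : Finset α)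
    (sb : Finset β) (sc : ∀ b, Finset (γ b)) (F : α → ∀ b, γ b → V) :
    ∑ a ∈ sa, ∑ b ∈ sb, ∑ c ∈ sc b, F a b c = ∑ b ∈ sb, ∑ c ∈ sc b, ∑ a ∈ sa, F a b c := by
  rw [Finset.sum_comm]
  exact Finset.sum_congr rfl fun b _ => Finset.sum_comm

lemma sum_perm4 {V : Type*} [AddCommMonoid V] {α β γ δ : Type*} (sa : Finset α) (sb : Finset β)
    (sc : Finset γ) (sd : Finset δ) (T : α → β → γ → δ → V) :
    ∑ a ∈ sa, ∑ b ∈ sb, ∑ c ∈ sc, ∑ d ∈ sd, T a b c d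
      = ∑ d ∈ sd, ∑ b ∈ sb, ∑ c ∈ sc, ∑ a ∈ sa, T a b c d := by
  calc ∑ a ∈ sa, ∑ b ∈ sb, ∑ c ∈ sc, ∑ d ∈ sd, T a b c d
      = ∑ a ∈ sa, ∑ b ∈ sb, ∑ d ∈ sd, ∑ c ∈ sc, T a b c d :=
        Finset.sum_congr rfl fun a _ => Finset.sum_congr rfl fun b _ => Finset.sum_comm
    _ = ∑ a ∈ sa, ∑ d ∈ sd, ∑ b ∈ sb, ∑ c ∈ sc, T a b c d :=
        Finset.sum_congr rfl fun a _ => Finset.sum_comm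
    _ = ∑ d ∈ sd, ∑ a ∈ sa, ∑ b ∈ sb, ∑ c ∈ sc, T a b c d := Finset.sum_comm
    _ = ∑ d ∈ sd, ∑ b ∈ sb, ∑ a ∈ sa, ∑ c ∈ sc, T a b c d :=
        Finset.sum_congr rfl fun d _ => Finset.sum_comm
    _ = ∑ d ∈ sd, ∑ b ∈ sb, ∑ c ∈ sc, ∑ a ∈ sa, T a b c d :=
        Finset.sum_congr rfl fun d _ => Finset.sum_congr rfl fun b _ => Finset.sum_comm

lemma ite_add_zero {V : Type*} [AddCommMonoid V] (c : Prop) [Decidable c] (x y : V) :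
    (if c then x + y else 0) = (if c then x else 0) + (if c then y else 0) := by
  split <;> simp

variable {A : Type*} [Ring A] [Algebra (ZMod 2) A]
variable {I J : Type*} [PartialOrder I] [PartialOrder J]
variable {M : I → Type*} [∀ i, AddCommGroup (M i)] [∀ i, Module (ZMod 2) (M i)]
variable {Q : J → Type*}

variable (Φ : ∀ i i' : I, i ≤ i' → M i → List A → M i')
variable (Δ : ∀ j j' : J, j ≤ j' → Q j → Q j' → A)

/-- amalgamated module maps, total version -/
noncomputable def Phi (i i' : I) (x : M i) (as : List A) : M i' :=
  if h : i ≤ i' then Φ i i' h x as else 0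

/-- amalgamated type D matrix, total version -/
noncomputable def Dd (g g' : Σ j : J, Q j) : A :=
  if h : g.1 ≤ g'.1 then Δ g.1 g'.1 h g.2 g'.2 else 0

/-- the list of algebra elements along a path of generators -/
noncomputable def L (k : ℕ) (s : Fin (k + 1) → Σ j : J, Q j) : List A :=
  List.ofFn fun t : Fin k => Dd Δ (s t.castSucc) (s t.succ)

section PhiLemmas

variable (hΦadd : ∀ i i' h (x y : M i) as, Φ i i' h (x + y) as = Φ i i' h x as + Φ i i' h y as)
variable (hΦml : ∀ i i' h (x : M i) pre (a b : A) post,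
      Φ i i' h x (pre ++ (a + b) :: post)
        = Φ i i' h x (pre ++ a :: post) + Φ i i' h x (pre ++ b :: post))

include hΦadd hΦml

lemma Phi_zero (i i' : I) (as : List A) : Phi Φ i i' (0 : M i) as = 0 := by
  unfold Phi; split
  · have h2 := hΦadd i i' ‹_› 0 0 as
    rw [add_zero] at h2
    exact left_eq_add.mp h2
  · rfl

lemma Phi_add (i i' : I) (x y : M i) (as : List A) :
    Phi Φ i i' (x + y) as = Phi Φ i i' x as + Phi Φ i i' y as := by
  unfold Phi; split
  · exact hΦadd i i' ‹_› x y as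
  · simp

lemma Phi_sum {γ : Type*} (i i' : I) (u : Finset γ) (c : γ → M i) (as : List A) :
    Phi Φ i i' (∑ g ∈ u, c g) as = ∑ g ∈ u, Phi Φ i i' (c g) as := by
  classical
  induction u using Finset.induction_on with
  | empty => simpa using Phi_zero Φ hΦadd hΦml i i' as
  | insert _ _ hnew ih =>
      rw [Finset.sum_insert hnew, Finset.sum_insert hnew, Phi_add Φ hΦadd hΦml, ih]

lemma Phi_slot_zero (i i' : I) (x : M i) (pre post : List A) :
    Phi Φ i i' x (pre ++ (0 : A) :: post) = 0 := by
  unfold Phi; split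
  · have h2 := hΦml i i' ‹_› x pre 0 0 post
    rw [add_zero] at h2
    exact left_eq_add.mp h2
  · rfl

lemma Phi_mem_zero (i i' : I) (x : M i) (as : List A) (h : (0 : A) ∈ as) :
    Phi Φ i i' x as = 0 := by
  obtain ⟨pre, post, rfl⟩ := List.append_of_mem h
  exact Phi_slot_zero Φ hΦadd hΦml i i' x pre post

lemma Phi_slot_add (i i' : I) (x : M i) (pre post : List A) (a b : A) :
    Phi Φ i i' x (pre ++ (a + b) :: post)
      = Phi Φ i i' x (pre ++ a :: post) + Phi Φ i i' x (pre ++ b :: post) := by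
  unfold Phi; split
  · exact hΦml i i' ‹_› x pre a b post
  · simp

lemma Phi_slot_sum {γ : Type*} (u : Finset γ) (c : γ → A) (i i' : I) (x : M i)
    (pre post : List A) :
    Phi Φ i i' x (pre ++ (∑ g ∈ u, c g) :: post)
      = ∑ g ∈ u, Phi Φ i i' x (pre ++ c g :: post) := by
  classical
  induction u using Finset.induction_on with
  | empty => simpa using Phi_slot_zero Φ hΦadd hΦml i i' x pre post
  | insert _ _ hnew ih =>
      rw [Finset.sum_insert hnew, Finset.sum_insert hnew, Phi_slot_add Φ hΦadd hΦml, ih]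

lemma Phiraw_zero (i i' : I) (h : i ≤ i') (as : List A) : Φ i i' h (0 : M i) as = 0 := by
  have h2 := hΦadd i i' h 0 0 as
  rw [add_zero] at h2
  exact left_eq_add.mp h2

lemma Phi_ite (c : Prop) [Decidable c] (i i' : I) (y : M i) (as : List A) :
    Phi Φ i i' (if c then y else 0) as = if c then Phi Φ i i' y as else 0 := by
  split
  · rfl
  · exact Phi_zero Φ hΦadd hΦml i i' as

end PhiLemmas


section TypeD

variable [Fintype J] [∀ j, Fintype (Q j)]
variable (dA : A →ₗ[ZMod 2] A)
variable (hTypeD : ∀ j j'' (h : j ≤ j'') (q : Q j) (r : Q j''),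
      dA (Δ j j'' h q r)
        + ∑ j' : J, (if h' : j ≤ j' ∧ j' ≤ j'' then
            ∑ p : Q j', Δ j j' h'.1 q p * Δ j' j'' h'.2 p r
          else 0)
      = 0)
include hTypeD

lemma Dd_d (g g'' : Σ j : J, Q j) :
    dA (Dd Δ g g'') = ∑ g' : Σ j : J, Q j, Dd Δ g g' * Dd Δ g' g'' := by
  rw [← Finset.univ_sigma_univ, Finset.sum_sigma]
  by_cases h : g.1 ≤ g''.1
  · have H2 : dA (Δ g.1 g''.1 h g.2 g''.2)
        = ∑ j' : J, (if h' : g.1 ≤ j' ∧ j' ≤ g''.1 then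
            ∑ p : Q j', Δ g.1 j' h'.1 g.2 p * Δ j' g''.1 h'.2 p g''.2 else 0) :=
      eq_of_add_eq_zero2 (hTypeD g.1 g''.1 h g.2 g''.2)
    rw [show Dd Δ g g'' = Δ g.1 g''.1 h g.2 g''.2 from dif_pos h, H2]
    refine Finset.sum_congr rfl fun j' _ => ?_
    by_cases h' : g.1 ≤ j' ∧ j' ≤ g''.1
    · rw [dif_pos h']
      refine Finset.sum_congr rfl fun p _ => ?_
      have e1 : Dd Δ g ⟨j', p⟩ = Δ g.1 j' h'.1 g.2 p := dif_pos h'.1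
      have e2 : Dd Δ ⟨j', p⟩ g'' = Δ j' g''.1 h'.2 p g''.2 := dif_pos h'.2
      rw [e1, e2]
    · rw [dif_neg h']
      symm
      refine Finset.sum_eq_zero fun p _ => ?_
      rcases not_and_or.mp h' with h1 | h1
      · rw [show Dd Δ g ⟨j', p⟩ = 0 from dif_neg h1, zero_mul]
      · rw [show Dd Δ ⟨j', p⟩ g'' = 0 from dif_neg h1, mul_zero]
  · rw [show Dd Δ g g'' = 0 from dif_neg h, map_zero]
    symm
    refine Finset.sum_eq_zero fun j' _ => Finset.sum_eq_zero fun p _ => ?_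
    by_cases h1 : g.1 ≤ j'
    · have h2 : ¬ (j' ≤ g''.1) := fun h2 => h (le_trans h1 h2)
      rw [show Dd Δ ⟨j', p⟩ g'' = 0 from dif_neg h2, mul_zero]
    · rw [show Dd Δ g ⟨j', p⟩ = 0 from dif_neg h1, zero_mul]

end TypeD

section Ainfty

variable [Fintype I]
variable (dA : A →ₗ[ZMod 2] A)
variable (hΦadd : ∀ i i' h (x y : M i) as, Φ i i' h (x + y) as = Φ i i' h x as + Φ i i' h y as)
variable (hΦml : ∀ i i' h (x : M i) pre (a b : A) post,
      Φ i i' h x (pre ++ (a + b) :: post)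
        = Φ i i' h x (pre ++ a :: post) + Φ i i' h x (pre ++ b :: post))
variable (hAinfty : ∀ i i'' (h : i ≤ i'') (x : M i) (as : List A),
      (∑ i' : I, if h' : i ≤ i' ∧ i' ≤ i'' then
          ∑ t ∈ Finset.range (as.length + 1),
            Φ i' i'' h'.2 (Φ i i' h'.1 x (as.take t)) (as.drop t)
        else 0)
      + (∑ t ∈ Finset.range as.length,
          Φ i i'' h x (as.set t (dA (as.getD t 0))))
      + (∑ t ∈ Finset.range (as.length - 1),
          Φ i i'' h x
            (as.take t ++ (as.getD t 0 * as.getD (t + 1) 0) :: as.drop (t + 2)))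
      = 0)
include hΦadd hΦml hAinfty

lemma Ainf (i i'' : I) (x : M i) (as : List A) :
    ∑ i' : I, ∑ t ∈ Finset.range (as.length + 1),
        Phi Φ i' i'' (Phi Φ i i' x (as.take t)) (as.drop t)
      = (∑ t ∈ Finset.range as.length, Phi Φ i i'' x (as.set t (dA (as.getD t 0))))
        + ∑ t ∈ Finset.range (as.length - 1),
            Phi Φ i i'' x (as.take t ++ (as.getD t 0 * as.getD (t + 1) 0) :: as.drop (t + 2)) := by
  by_cases h : i ≤ i''
  · have H := hAinfty i i'' h x as
    have hfirst : (∑ i' : I, if h' : i ≤ i' ∧ i' ≤ i'' then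
          ∑ t ∈ Finset.range (as.length + 1),
            Φ i' i'' h'.2 (Φ i i' h'.1 x (as.take t)) (as.drop t)
        else 0)
        = ∑ i' : I, ∑ t ∈ Finset.range (as.length + 1),
            Phi Φ i' i'' (Phi Φ i i' x (as.take t)) (as.drop t) := by
      refine Finset.sum_congr rfl fun i' _ => ?_
      by_cases h' : i ≤ i' ∧ i' ≤ i''
      · rw [dif_pos h']
        refine Finset.sum_congr rfl fun t _ => ?_
        rw [show Phi Φ i i' x (as.take t) = Φ i i' h'.1 x (as.take t) from dif_pos h'.1]
        exact (show Phi Φ i' i'' (Φ i i' h'.1 x (as.take t)) (as.drop t)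
          = Φ i' i'' h'.2 (Φ i i' h'.1 x (as.take t)) (as.drop t) from dif_pos h'.2).symm
      · rw [dif_neg h']
        symm
        refine Finset.sum_eq_zero fun t _ => ?_
        rcases not_and_or.mp h' with h1 | h1
        · rw [show Phi Φ i i' x (as.take t) = 0 from dif_neg h1]
          exact Phi_zero Φ hΦadd hΦml i' i'' _
        · exact dif_neg h1
    have hsnd : ∀ t, Φ i i'' h x (as.set t (dA (as.getD t 0)))
        = Phi Φ i i'' x (as.set t (dA (as.getD t 0))) := fun t =>
      (show Phi Φ i i'' x _ = _ from dif_pos h).symm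
    have hthd : ∀ t, Φ i i'' h x (as.take t ++ (as.getD t 0 * as.getD (t + 1) 0) :: as.drop (t + 2))
        = Phi Φ i i'' x (as.take t ++ (as.getD t 0 * as.getD (t + 1) 0) :: as.drop (t + 2)) :=
      fun t => (show Phi Φ i i'' x _ = _ from dif_pos h).symm
    rw [hfirst] at H
    simp only [hsnd, hthd] at H
    exact eq_of_add_eq_zero2 (by rw [← add_assoc]; exact H)
  · have hL : ∀ i' ∈ Finset.univ (α := I), ∑ t ∈ Finset.range (as.length + 1),
        Phi Φ i' i'' (Phi Φ i i' x (as.take t)) (as.drop t) = 0 := by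
      intro i' _
      refine Finset.sum_eq_zero fun t _ => ?_
      by_cases h1 : i ≤ i'
      · have h2 : ¬ (i' ≤ i'') := fun h2 => h (le_trans h1 h2)
        exact dif_neg h2
      · rw [show Phi Φ i i' x (as.take t) = 0 from dif_neg h1]
        exact Phi_zero Φ hΦadd hΦml i' i'' _
    rw [Finset.sum_eq_zero hL]
    have hz : ∀ (l : List A), Phi Φ i i'' x l = 0 := fun l => dif_neg h
    simp [hz]

end Ainfty

section Paths

lemma L_length (k : ℕ) (s : Fin (k + 1) → Σ j : J, Q j) : (L Δ k s).length = k := by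
  simp [L]

lemma L_getElem (k : ℕ) (s : Fin (k + 1) → Σ j : J, Q j) (t : ℕ) (h : t < k) :
    (L Δ k s)[t]'(by rw [L_length]; exact h)
      = Dd Δ (s ⟨t, by omega⟩) (s ⟨t + 1, by omega⟩) := by
  simp only [L, List.getElem_ofFn]
  rfl

lemma L_getD (k : ℕ) (s : Fin (k + 1) → Σ j : J, Q j) (t : ℕ) (h : t < k) :
    (L Δ k s).getD t 0 = Dd Δ (s ⟨t, by omega⟩) (s ⟨t + 1, by omega⟩) := by
  rw [List.getD_eq_getElem _ _ (by rw [L_length]; exact h)]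
  exact L_getElem Δ k s t h

lemma L_take (m n : ℕ) (s : Fin (m + n + 1) → Σ j : J, Q j) :
    (L Δ (m + n) s).take m = L Δ m (fun u => s ⟨u.1, by omega⟩) := by
  apply List.ext_getElem
  · simp [L_length]
  · intro t h1 h2
    simp only [List.getElem_take, L, List.getElem_ofFn]
    rfl

lemma L_drop (m n : ℕ) (s : Fin (m + n + 1) → Σ j : J, Q j) :
    (L Δ (m + n) s).drop m = L Δ n (fun v => s ⟨m + v.1, by omega⟩) := by
  apply List.ext_getElem
  · simp [L_length]
  · intro t h1 h2
    simp only [List.getElem_drop, L, List.getElem_ofFn]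
    rfl

end Paths

section Equivs

variable {β : Type*}

/-- splitting a path of length `m + n` into its first `m + 1` points and last `n` points -/
def splitE (m n : ℕ) : (Fin (m + n + 1) → β) ≃ ((Fin (m + 1) → β) × (Fin n → β)) where
  toFun s := (fun u => s ⟨u.1, by omega⟩, fun v => s ⟨m + 1 + v.1, by omega⟩)
  invFun rq u := if h : u.1 ≤ m then rq.1 ⟨u.1, by omega⟩ else rq.2 ⟨u.1 - (m + 1), by omega⟩
  left_inv s := by
    funext u
    by_cases h : u.1 ≤ m
    · simp only [dif_pos h]
    · simp only [dif_neg h]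
      exact congrArg s (Fin.ext (by simp <;> omega))
  right_inv rq := by
    refine Prod.ext ?_ ?_
    · funext u
      have h : (u : ℕ) ≤ m := by omega
      simp only [dif_pos h]
    · funext v
      have h : ¬ ((m + 1 + v.1 : ℕ) ≤ m) := by omega
      simp only [dif_neg h]
      exact congrArg rq.2 (Fin.ext (by simp))

lemma sum_split {V : Type*} [Fintype β] [AddCommMonoid V] (m n : ℕ)
    (K : (Fin (m + 1) → β) → (Fin (n + 1) → β) → V)
    (hK : ∀ r p, r (Fin.last m) ≠ p 0 → K r p = 0) :
    ∑ r : Fin (m + 1) → β, ∑ p : Fin (n + 1) → β, K r p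
      = ∑ s : Fin (m + n + 1) → β,
          K (fun u => s ⟨u.1, by omega⟩) (fun v => s ⟨m + v.1, by omega⟩) := by
  classical
  have hR : ∀ (r : Fin (m + 1) → β) (q : Fin n → β),
      (fun u : Fin (m + 1) => (splitE m n).symm (r, q) ⟨u.1, by omega⟩) = r := by
    intro r q
    funext u
    have h : (u : ℕ) ≤ m := by omega
    simp only [splitE, Equiv.coe_fn_symm_mk, dif_pos h]
  have hP : ∀ (r : Fin (m + 1) → β) (q : Fin n → β),
      (fun v : Fin (n + 1) => (splitE m n).symm (r, q) ⟨m + v.1, by omega⟩)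
        = Fin.cons (r (Fin.last m)) q := by
    intro r q
    funext v
    refine Fin.cases ?_ ?_ v
    · have h : ((m : ℕ) + (0 : Fin (n + 1)).1) ≤ m := by simp
      simp only [splitE, Equiv.coe_fn_symm_mk, dif_pos h, Fin.cons_zero]
      exact congrArg r (Fin.ext (by simp))
    · intro w
      have h : ¬ ((m + ((w.succ : Fin (n + 1)) : ℕ) : ℕ) ≤ m) := by simp [Fin.val_succ]
      simp only [splitE, Equiv.coe_fn_symm_mk, dif_neg h, Fin.cons_succ]
      exact congrArg q (Fin.ext (by simp [Fin.val_succ]; omega))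
  have key : (∑ s : Fin (m + n + 1) → β,
        K (fun u => s ⟨u.1, by omega⟩) (fun v => s ⟨m + v.1, by omega⟩))
      = ∑ rq : (Fin (m + 1) → β) × (Fin n → β),
          K rq.1 (Fin.cons (rq.1 (Fin.last m)) rq.2) := by
    rw [← Equiv.sum_comp (splitE m n).symm
      (fun s => K (fun u => s ⟨u.1, by omega⟩) (fun v => s ⟨m + v.1, by omega⟩))]
    refine Finset.sum_congr rfl fun rq _ => ?_
    rw [hR rq.1 rq.2, hP rq.1 rq.2]
  rw [key, Fintype.sum_prod_type]
  refine Finset.sum_congr rfl fun r _ => ?_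
  rw [← Equiv.sum_comp (Fin.consEquiv (fun _ : Fin (n + 1) => β)) (fun p => K r p),
    Fintype.sum_prod_type]
  rw [Finset.sum_comm]
  refine Finset.sum_congr rfl fun q _ => ?_
  rw [Finset.sum_eq_single (r (Fin.last m))]
  · simp [Fin.consEquiv]
  · intro g _ hg
    simp only [Fin.consEquiv, Equiv.coe_fn_mk]
    exact hK r (Fin.cons g q) (by simpa using fun e => hg e.symm)
  · intro hmem
    exact absurd (Finset.mem_univ _) hmem

/-- inserting a new point into a path after position `t` -/
def insertE (k t : ℕ) (ht : t < k) : ((Fin (k + 1) → β) × β) ≃ (Fin (k + 2) → β) where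
  toFun sg u :=
    if h : u.1 ≤ t then sg.1 ⟨u.1, by omega⟩
    else if h2 : u.1 = t + 1 then sg.2 else sg.1 ⟨u.1 - 1, by omega⟩
  invFun s' :=
    (fun u => if h : u.1 ≤ t then s' ⟨u.1, by omega⟩ else s' ⟨u.1 + 1, by omega⟩,
      s' ⟨t + 1, by omega⟩)
  left_inv sg := by
    refine Prod.ext ?_ ?_
    · funext u
      by_cases h : u.1 ≤ t
      · simp only [dif_pos h]
      · have h2 : ¬ ((u.1 + 1 : ℕ) ≤ t) := by omega
        have h3 : ¬ ((u.1 + 1 : ℕ) = t + 1) := by omega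
        simp only [dif_neg h, dif_neg h2, dif_neg h3]
        exact congrArg sg.1 (Fin.ext (by simp))
    · have h2 : ¬ ((t + 1 : ℕ) ≤ t) := by omega
      simp only [dif_neg h2]
      simp
  right_inv s' := by
    funext u
    by_cases h : u.1 ≤ t
    · simp only [dif_pos h]
    · by_cases h2 : u.1 = t + 1
      · simp only [dif_neg h, dif_pos h2]
        exact congrArg s' (Fin.ext (by simp [h2]))
      · have h3 : ¬ ((u.1 - 1 : ℕ) ≤ t) := by omega
        simp only [dif_neg h, dif_neg h2, dif_neg h3]
        exact congrArg s' (Fin.ext (by simp; omega))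

lemma insertE_val_le (k t : ℕ) (ht : t < k) (s : Fin (k + 1) → β) (g : β)
    (u : Fin (k + 2)) (hu : u.1 ≤ t) :
    insertE k t ht (s, g) u = s ⟨u.1, by omega⟩ := by
  simp only [insertE, Equiv.coe_fn_mk, dif_pos hu]

lemma insertE_val_eq (k t : ℕ) (ht : t < k) (s : Fin (k + 1) → β) (g : β)
    (u : Fin (k + 2)) (hu : u.1 = t + 1) :
    insertE k t ht (s, g) u = g := by
  have h : ¬ (u.1 ≤ t) := by omega
  simp only [insertE, Equiv.coe_fn_mk, dif_neg h, dif_pos hu]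

lemma insertE_val_ge (k t : ℕ) (ht : t < k) (s : Fin (k + 1) → β) (g : β)
    (u : Fin (k + 2)) (hu : t + 1 < u.1) :
    insertE k t ht (s, g) u = s ⟨u.1 - 1, by omega⟩ := by
  have h : ¬ (u.1 ≤ t) := by omega
  have h2 : ¬ (u.1 = t + 1) := by omega
  simp only [insertE, Equiv.coe_fn_mk, dif_neg h, dif_neg h2]

end Equivs


section Nth

variable {β : Type*}

/-- total version of evaluating a path at a natural number index -/
def nth (k : ℕ) (s : Fin (k + 1) → β) (t : ℕ) : β := s ⟨min t k, by omega⟩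

lemma nth_eq (k : ℕ) (s : Fin (k + 1) → β) (t : ℕ) (h : t ≤ k) :
    nth k s t = s ⟨t, by omega⟩ :=
  congrArg s (Fin.ext (by simp [min_eq_left h]))

lemma sum_insert_reindex {V : Type*} [AddCommMonoid V] [Fintype β] (k t : ℕ) (ht : t < k)
    (F : (Fin (k + 2) → β) → V) :
    ∑ s' : Fin (k + 2) → β, F s' = ∑ s : Fin (k + 1) → β, ∑ g : β, F (insertE k t ht (s, g)) := by
  rw [← Equiv.sum_comp (insertE k t ht) F, Fintype.sum_prod_type]

end Nth

section InsL

lemma L_getD_nth (k : ℕ) (s : Fin (k + 1) → Σ j : J, Q j) (t : ℕ) (h : t < k) :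
    (L Δ k s).getD t 0 = Dd Δ (nth k s t) (nth k s (t + 1)) := by
  rw [L_getD Δ k s t h, nth_eq k s t (by omega), nth_eq k s (t + 1) (by omega)]

lemma ins_zero (k t : ℕ) (ht : t < k) (s : Fin (k + 1) → Σ j : J, Q j) (g : Σ j : J, Q j) :
    insertE k t ht (s, g) 0 = s 0 := by
  rw [insertE_val_le k t ht s g 0 (by simp)]
  exact congrArg s (Fin.ext (by simp))

lemma ins_last (k t : ℕ) (ht : t < k) (s : Fin (k + 1) → Σ j : J, Q j) (g : Σ j : J, Q j) :
    insertE k t ht (s, g) (Fin.last (k + 1)) = s (Fin.last k) := by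
  rw [insertE_val_ge k t ht s g (Fin.last (k + 1)) (by simp [Fin.last]; omega)]
  exact congrArg s (Fin.ext (by simp [Fin.last]))

lemma L_ins_take (k t : ℕ) (ht : t < k) (s : Fin (k + 1) → Σ j : J, Q j) (g : Σ j : J, Q j) :
    (L Δ (k + 1) (insertE k t ht (s, g))).take t = (L Δ k s).take t := by
  apply List.ext_getElem
  · rw [List.length_take, List.length_take, L_length, L_length]
    omega
  · intro u h1 h2
    rw [List.length_take, L_length] at h1
    have hu : u < t := by omega
    simp only [List.getElem_take]
    rw [L_getElem Δ (k + 1) _ u (by omega), L_getElem Δ k s u (by omega)]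
    have e1 : insertE k t ht (s, g) ⟨u, by omega⟩ = s ⟨u, by omega⟩ :=
      insertE_val_le k t ht s g ⟨u, by omega⟩ (by show u ≤ t; omega)
    have e2 : insertE k t ht (s, g) ⟨u + 1, by omega⟩ = s ⟨u + 1, by omega⟩ :=
      insertE_val_le k t ht s g ⟨u + 1, by omega⟩ (by show u + 1 ≤ t; omega)
    rw [e1, e2]

lemma L_ins_at (k t : ℕ) (ht : t < k) (s : Fin (k + 1) → Σ j : J, Q j) (g : Σ j : J, Q j) :
    (L Δ (k + 1) (insertE k t ht (s, g))).getD t 0 = Dd Δ (nth k s t) g := by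
  rw [L_getD Δ (k + 1) _ t (by omega), nth_eq k s t (by omega)]
  have e1 : insertE k t ht (s, g) ⟨t, by omega⟩ = s ⟨t, by omega⟩ :=
    insertE_val_le k t ht s g ⟨t, by omega⟩ (by show t ≤ t; omega)
  have e2 : insertE k t ht (s, g) ⟨t + 1, by omega⟩ = g :=
    insertE_val_eq k t ht s g ⟨t + 1, by omega⟩ rfl
  rw [e1, e2]

lemma L_ins_at1 (k t : ℕ) (ht : t < k) (s : Fin (k + 1) → Σ j : J, Q j) (g : Σ j : J, Q j) :
    (L Δ (k + 1) (insertE k t ht (s, g))).getD (t + 1) 0 = Dd Δ g (nth k s (t + 1)) := by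
  rw [L_getD Δ (k + 1) _ (t + 1) (by omega), nth_eq k s (t + 1) (by omega)]
  have e1 : insertE k t ht (s, g) ⟨t + 1, by omega⟩ = g :=
    insertE_val_eq k t ht s g ⟨t + 1, by omega⟩ rfl
  have e2 : insertE k t ht (s, g) ⟨t + 1 + 1, by omega⟩ = s ⟨t + 1, by omega⟩ := by
    rw [insertE_val_ge k t ht s g ⟨t + 1 + 1, by omega⟩ (by show t + 1 < t + 1 + 1; omega)]
    exact congrArg s (Fin.ext (by simp <;> omega))
  rw [e1, e2]

lemma L_ins_drop (k t : ℕ) (ht : t < k) (s : Fin (k + 1) → Σ j : J, Q j) (g : Σ j : J, Q j) :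
    (L Δ (k + 1) (insertE k t ht (s, g))).drop (t + 2) = (L Δ k s).drop (t + 1) := by
  apply List.ext_getElem
  · rw [List.length_drop, List.length_drop, L_length, L_length]
    omega
  · intro u h1 h2
    rw [List.length_drop, L_length] at h1
    simp only [List.getElem_drop]
    rw [L_getElem Δ (k + 1) _ (t + 2 + u) (by omega), L_getElem Δ k s (t + 1 + u) (by omega)]
    have e1 : insertE k t ht (s, g) ⟨t + 2 + u, by omega⟩ = s ⟨t + 1 + u, by omega⟩ := by
      rw [insertE_val_ge k t ht s g ⟨t + 2 + u, by omega⟩ (by show t + 1 < t + 2 + u; omega)]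
      exact congrArg s (Fin.ext (by simp <;> omega))
    have e2 : insertE k t ht (s, g) ⟨t + 2 + u + 1, by omega⟩ = s ⟨t + 1 + u + 1, by omega⟩ := by
      rw [insertE_val_ge k t ht s g ⟨t + 2 + u + 1, by omega⟩ (by show t + 1 < t + 2 + u + 1; omega)]
      exact congrArg s (Fin.ext (by simp <;> omega))
    rw [e1, e2]

end InsL


section MainSums

variable [Fintype I] [Fintype J] [∀ j, Fintype (Q j)]

/-- partial sums of the box tensor differential: paths of a fixed length -/
noncomputable def Spath (f : ∀ i j, Q j → M i) (i i' : I) (g : Σ j : J, Q j) (m : ℕ) : M i' :=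
  ∑ r : Fin (m + 1) → Σ j : J, Q j,
    if r (Fin.last m) = g then Phi Φ i i' (f i (r 0).1 (r 0).2) (L Δ m r) else 0

/-- terms of the square of the differential: a path of length `k` split at `t` -/
noncomputable def rowterm (f : ∀ i j, Q j → M i) (i'' : I) (g'' : Σ j : J, Q j) (k t : ℕ) :
    M i'' :=
  ∑ i : I, ∑ i' : I, ∑ s : Fin (k + 1) → Σ j : J, Q j,
    if s (Fin.last k) = g'' then
      Phi Φ i' i'' (Phi Φ i i' (f i (s 0).1 (s 0).2) ((L Δ k s).take t)) ((L Δ k s).drop t)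
    else 0

/-- the terms coming from the differential of the algebra elements -/
noncomputable def UB (dA : A →ₗ[ZMod 2] A) (f : ∀ i j, Q j → M i) (i'' : I)
    (g'' : Σ j : J, Q j) (k : ℕ) : M i'' :=
  ∑ i : I, ∑ s : Fin (k + 1) → Σ j : J, Q j,
    if s (Fin.last k) = g'' then
      ∑ t ∈ Finset.range k,
        Phi Φ i i'' (f i (s 0).1 (s 0).2) ((L Δ k s).set t (dA ((L Δ k s).getD t 0)))
    else 0

/-- the terms coming from multiplying consecutive algebra elements -/
noncomputable def UC (f : ∀ i j, Q j → M i) (i'' : I) (g'' : Σ j : J, Q j) (k : ℕ) : M i'' :=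
  ∑ i : I, ∑ s : Fin (k + 1) → Σ j : J, Q j,
    if s (Fin.last k) = g'' then
      ∑ t ∈ Finset.range (k - 1),
        Phi Φ i i'' (f i (s 0).1 (s 0).2)
          ((L Δ k s).take t ++ ((L Δ k s).getD t 0 * (L Δ k s).getD (t + 1) 0)
            :: (L Δ k s).drop (t + 2))
    else 0

lemma splice_inst (f : ∀ i j, Q j → M i) (i i' i'' : I) (g'' : Σ j : J, Q j) (m n : ℕ) :
    (∑ r : Fin (m + 1) → Σ j : J, Q j, ∑ p : Fin (n + 1) → Σ j : J, Q j,
      if p (Fin.last n) = g'' ∧ r (Fin.last m) = p 0 then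
        Phi Φ i' i'' (Phi Φ i i' (f i (r 0).1 (r 0).2) (L Δ m r)) (L Δ n p)
      else 0)
    = ∑ s : Fin (m + n + 1) → Σ j : J, Q j,
        if s (Fin.last (m + n)) = g'' then
          Phi Φ i' i''
            (Phi Φ i i' (f i (s 0).1 (s 0).2) ((L Δ (m + n) s).take m))
            ((L Δ (m + n) s).drop m)
        else 0 := by
  rw [sum_split m n
    (fun r p => if p (Fin.last n) = g'' ∧ r (Fin.last m) = p 0 then
        Phi Φ i' i'' (Phi Φ i i' (f i (r 0).1 (r 0).2) (L Δ m r)) (L Δ n p)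
      else 0)
    (fun r p hrp => if_neg (fun hc => hrp hc.2))]
  refine Finset.sum_congr rfl fun s _ => ?_
  beta_reduce
  by_cases hc : s (Fin.last (m + n)) = g''
  · rw [if_pos, if_pos hc]
    · rw [L_take Δ m n s, L_drop Δ m n s]
      rw [show (⟨((0 : Fin (m + 1)) : ℕ), by omega⟩ : Fin (m + n + 1)) = 0 from
        Fin.ext (by simp)]
    · constructor
      · rw [show (⟨m + ((Fin.last n : Fin (n + 1)) : ℕ), by omega⟩ : Fin (m + n + 1))
          = Fin.last (m + n) from Fin.ext (by simp [Fin.last])]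
        exact hc
      · exact congrArg s (Fin.ext (by simp))
  · rw [if_neg, if_neg hc]
    intro hcc
    refine hc ?_
    rw [show (⟨m + ((Fin.last n : Fin (n + 1)) : ℕ), by omega⟩ : Fin (m + n + 1))
        = Fin.last (m + n) from Fin.ext (by simp [Fin.last])] at hcc
    exact hcc.1

end MainSums


section Vanish

variable [Fintype I] [Fintype J] [∀ j, Fintype (Q j)]
variable (hΦadd : ∀ i i' h (x y : M i) as, Φ i i' h (x + y) as = Φ i i' h x as + Φ i i' h y as)
variable (hΦml : ∀ i i' h (x : M i) pre (a b : A) post,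
      Φ i i' h x (pre ++ (a + b) :: post)
        = Φ i i' h x (pre ++ a :: post) + Φ i i' h x (pre ++ b :: post))

lemma mono_fail (n : ℕ) (p : Fin (n + 1) → Σ j : J, Q j)
    (h : ¬ Monotone fun t => (p t).1) :
    ∃ t : Fin n, ¬ ((p t.castSucc).1 ≤ (p t.succ).1) := by
  by_contra hc
  push_neg at hc
  exact h (Fin.monotone_iff_le_succ.mpr hc)

include hΦadd hΦml in
lemma zlems
    (hbounded :
      (∃ N, ∀ i i' h (x : M i) (as : List A), N ≤ as.length → Φ i i' h x as = 0) ∨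
      (∃ N, ∀ n, N ≤ n → ∀ js : Fin (n + 1) → J, ∀ hm : Monotone js,
        ∀ qs : ∀ t, Q (js t), ∃ t : Fin n,
          Δ (js t.castSucc) (js t.succ) (hm (Fin.castSucc_lt_succ : t.castSucc < t.succ).le)
            (qs t.castSucc) (qs t.succ) = 0)) :
    ∃ N0 : ℕ, 1 ≤ N0
      ∧ (∀ n, N0 ≤ n → ∀ (s : Fin (n + 1) → Σ j : J, Q j) (i i' : I) (x : M i),
          Phi Φ i i' x (L Δ n s) = 0)
      ∧ (∀ (s : Fin (2 * N0 + 1) → Σ j : J, Q j) (t : ℕ), t + 2 ≤ 2 * N0 →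
          ∀ (i i' : I) (x : M i),
            Phi Φ i i' x ((L Δ (2 * N0) s).take t
              ++ ((L Δ (2 * N0) s).getD t 0 * (L Δ (2 * N0) s).getD (t + 1) 0)
              :: (L Δ (2 * N0) s).drop (t + 2)) = 0) := by
  rcases hbounded with ⟨N, hN⟩ | ⟨N, hN⟩
  · refine ⟨N + 1, by omega, ?_, ?_⟩
    · intro n hn s i i' x
      unfold Phi; split
      · exact hN i i' ‹_› x _ (by rw [L_length]; omega)
      · rfl
    · intro s t htt i i' x
      unfold Phi; split
      · refine hN i i' ‹_› x _ ?_
        simp only [List.length_append, List.length_take, List.length_cons, List.length_drop,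
          L_length]
        omega
      · rfl
  · have zedge : ∀ n, N ≤ n → ∀ s : Fin (n + 1) → Σ j : J, Q j,
        ∃ t : Fin n, Dd Δ (s t.castSucc) (s t.succ) = 0 := by
      intro n hn s
      by_cases hm : Monotone fun t => (s t).1
      · obtain ⟨t, ht⟩ := hN n hn (fun t => (s t).1) hm (fun t => (s t).2)
        refine ⟨t, ?_⟩
        rw [show Dd Δ (s t.castSucc) (s t.succ)
          = Δ (s t.castSucc).1 (s t.succ).1 (hm (Fin.castSucc_lt_succ : t.castSucc < t.succ).le)
              (s t.castSucc).2 (s t.succ).2 from dif_pos (hm (Fin.castSucc_lt_succ : t.castSucc < t.succ).le)]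
        exact ht
      · obtain ⟨t, ht⟩ := mono_fail n s hm
        exact ⟨t, dif_neg ht⟩
    refine ⟨N + 1, by omega, ?_, ?_⟩
    · intro n hn s i i' x
      obtain ⟨t, ht⟩ := zedge n (by omega) s
      exact Phi_mem_zero Φ hΦadd hΦml i i' x _ (List.mem_ofFn.mpr ⟨t, ht⟩)
    · intro s t htt i i' x
      obtain ⟨t0, ht0⟩ := zedge (2 * (N + 1)) (by omega) s
      have hDd0 : ∀ (u : ℕ) (hu : u < 2 * (N + 1)), u = t0.1 →
          Dd Δ (s ⟨u, by omega⟩) (s ⟨u + 1, by omega⟩) = 0 := by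
        intro u hu he
        have e1 : (⟨u, by omega⟩ : Fin (2 * (N + 1) + 1)) = t0.castSucc :=
          Fin.ext (by simp [he])
        have e2 : (⟨u + 1, by omega⟩ : Fin (2 * (N + 1) + 1)) = t0.succ :=
          Fin.ext (by simp [he])
        rw [e1, e2]; exact ht0
      have hlt := t0.isLt
      by_cases h1 : t0.1 = t
      · have hg : (L Δ (2 * (N + 1)) s).getD t 0 = 0 := by
          rw [L_getD Δ _ s t (by omega)]
          exact hDd0 t (by omega) h1.symm
        rw [hg, zero_mul]
        exact Phi_slot_zero Φ hΦadd hΦml i i' x _ _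
      · by_cases h2 : t0.1 = t + 1
        · have hg : (L Δ (2 * (N + 1)) s).getD (t + 1) 0 = 0 := by
            rw [L_getD Δ _ s (t + 1) (by omega)]
            exact hDd0 (t + 1) (by omega) h2.symm
          rw [hg, mul_zero]
          exact Phi_slot_zero Φ hΦadd hΦml i i' x _ _
        · by_cases h3 : t0.1 < t
          · have hb : t0.1 < ((L Δ (2 * (N + 1)) s).take t).length := by
              simp only [List.length_take, L_length]
              omega
            have hz : ((L Δ (2 * (N + 1)) s).take t)[t0.1]'hb = 0 := by
              rw [List.getElem_take]
              rw [L_getElem Δ _ s t0.1 (by omega)]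
              exact hDd0 t0.1 (by omega) rfl
            exact Phi_mem_zero Φ hΦadd hΦml i i' x _
              (List.mem_append_left _ (hz ▸ List.getElem_mem hb))
          · have hb : t0.1 - (t + 2) < ((L Δ (2 * (N + 1)) s).drop (t + 2)).length := by
              simp only [List.length_drop, L_length]
              omega
            have hz : ((L Δ (2 * (N + 1)) s).drop (t + 2))[t0.1 - (t + 2)]'hb = 0 := by
              rw [List.getElem_drop]
              have hidx : t + 2 + (t0.1 - (t + 2)) = t0.1 := by omega
              simp only [hidx]
              rw [L_getElem Δ _ s t0.1 (by omega)]
              exact hDd0 t0.1 (by omega) rfl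
            exact Phi_mem_zero Φ hΦadd hΦml i i' x _
              (List.mem_append_right _
                (List.mem_cons_of_mem _ (hz ▸ List.getElem_mem hb)))

end Vanish


section Red

variable [Fintype I] [Fintype J] [∀ j, Fintype (Q j)]
variable (hΦadd : ∀ i i' h (x y : M i) as, Φ i i' h (x + y) as = Φ i i' h x as + Φ i i' h y as)
variable (hΦml : ∀ i i' h (x : M i) pre (a b : A) post,
      Φ i i' h x (pre ++ (a + b) :: post)
        = Φ i i' h x (pre ++ a :: post) + Φ i i' h x (pre ++ b :: post))

include hΦadd hΦml in
lemma red (N0 : ℕ)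
    (hZ2 : ∀ n, N0 ≤ n → ∀ (s : Fin (n + 1) → Σ j : J, Q j) (i i' : I) (x : M i),
      Phi Φ i i' x (L Δ n s) = 0)
    (Dtot : (∀ i j, Q j → M i) → (∀ i j, Q j → M i))
    (hDtot : ∀ f i' j' (q' : Q j'),
      Dtot f i' j' q' =
        ∑ i : I, if hi : i ≤ i' then
          ∑ᶠ n : ℕ,
            ∑ p : Fin (n + 1) → (Σ j : J, Q j),
              if hp : Monotone (fun t => (p t).1) ∧ p (Fin.last n) = ⟨j', q'⟩ then
                Φ i i' hi (f i (p 0).1 (p 0).2)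
                  (List.ofFn (fun t : Fin n =>
                    Δ (p t.castSucc).1 (p t.succ).1
                      (hp.1 (Fin.castSucc_lt_succ : t.castSucc < t.succ).le)
                      (p t.castSucc).2 (p t.succ).2))
              else 0
        else 0)
    (hfun : ∀ i j, Q j → M i) (i'' : I) (j'' : J) (q'' : Q j'') :
    Dtot hfun i'' j'' q''
      = ∑ i : I, ∑ m ∈ Finset.range N0, Spath Φ Δ hfun i i'' ⟨j'', q''⟩ m := by
  rw [hDtot]
  refine Finset.sum_congr rfl fun i _ => ?_
  by_cases hi : i ≤ i''
  · rw [dif_pos hi]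
    have hS : ∀ n : ℕ,
        (∑ p : Fin (n + 1) → Σ j : J, Q j,
          if hp : Monotone (fun t => (p t).1) ∧ p (Fin.last n) = ⟨j'', q''⟩ then
            Φ i i'' hi (hfun i (p 0).1 (p 0).2)
              (List.ofFn (fun t : Fin n =>
                Δ (p t.castSucc).1 (p t.succ).1
                  (hp.1 (Fin.castSucc_lt_succ : t.castSucc < t.succ).le)
                  (p t.castSucc).2 (p t.succ).2))
          else 0)
        = Spath Φ Δ hfun i i'' ⟨j'', q''⟩ n := by
      intro n
      unfold Spath
      refine Finset.sum_congr rfl fun p _ => ?_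
      by_cases hend : p (Fin.last n) = (⟨j'', q''⟩ : Σ j : J, Q j)
      · by_cases hm : Monotone fun t => (p t).1
        · rw [dif_pos ⟨hm, hend⟩, if_pos hend]
          rw [show Phi Φ i i'' (hfun i (p 0).1 (p 0).2) (L Δ n p)
            = Φ i i'' hi (hfun i (p 0).1 (p 0).2) (L Δ n p) from dif_pos hi]
          congr 1
          unfold L
          refine congrArg List.ofFn (funext fun t => ?_)
          exact (dif_pos (hm (Fin.castSucc_lt_succ : t.castSucc < t.succ).le) :
            Dd Δ (p t.castSucc) (p t.succ) = _).symm
        · rw [dif_neg (fun hc => hm (And.left hc)), if_pos hend]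
          obtain ⟨t, ht⟩ := mono_fail n p hm
          exact (Phi_mem_zero Φ hΦadd hΦml i i'' _ _
            (List.mem_ofFn.mpr ⟨t, dif_neg ht⟩)).symm
      · rw [dif_neg (fun hc => hend (And.right hc)), if_neg hend]
    rw [finsum_congr hS]
    refine finsum_eq_sum_of_support_subset _ (fun n hn => ?_)
    simp only [Function.mem_support] at hn
    simp only [Finset.coe_range, Set.mem_Iio]
    by_contra hge
    refine hn ?_
    refine Finset.sum_eq_zero fun r _ => ?_
    rw [hZ2 n (by omega) r i i'']
    simp
  · rw [dif_neg hi]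
    symm
    refine Finset.sum_eq_zero fun m _ => ?_
    refine Finset.sum_eq_zero fun r _ => ?_
    rw [show Phi Φ i i'' (hfun i (r 0).1 (r 0).2) (L Δ m r) = 0 from dif_neg hi]
    simp

end Red


section RowStep

variable [Fintype I] [Fintype J] [∀ j, Fintype (Q j)]
variable (dA : A →ₗ[ZMod 2] A)
variable (hΦadd : ∀ i i' h (x y : M i) as, Φ i i' h (x + y) as = Φ i i' h x as + Φ i i' h y as)
variable (hΦml : ∀ i i' h (x : M i) pre (a b : A) post,
      Φ i i' h x (pre ++ (a + b) :: post)
        = Φ i i' h x (pre ++ a :: post) + Φ i i' h x (pre ++ b :: post))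
variable (hAinfty : ∀ i i'' (h : i ≤ i'') (x : M i) (as : List A),
      (∑ i' : I, if h' : i ≤ i' ∧ i' ≤ i'' then
          ∑ t ∈ Finset.range (as.length + 1),
            Φ i' i'' h'.2 (Φ i i' h'.1 x (as.take t)) (as.drop t)
        else 0)
      + (∑ t ∈ Finset.range as.length,
          Φ i i'' h x (as.set t (dA (as.getD t 0))))
      + (∑ t ∈ Finset.range (as.length - 1),
          Φ i i'' h x
            (as.take t ++ (as.getD t 0 * as.getD (t + 1) 0) :: as.drop (t + 2)))
      = 0)
variable (hTypeD : ∀ j j'' (h : j ≤ j'') (q : Q j) (r : Q j''),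
      dA (Δ j j'' h q r)
        + ∑ j' : J, (if h' : j ≤ j' ∧ j' ≤ j'' then
            ∑ p : Q j', Δ j j' h'.1 q p * Δ j' j'' h'.2 p r
          else 0)
      = 0)

include hΦadd hΦml hAinfty in
lemma row_split (f : ∀ i j, Q j → M i) (i'' : I) (g'' : Σ j : J, Q j) (k : ℕ) :
    ∑ t ∈ Finset.range (k + 1), rowterm Φ Δ f i'' g'' k t
      = UB Φ Δ dA f i'' g'' k + UC Φ Δ f i'' g'' k := by
  unfold rowterm UB UC
  rw [Finset.sum_comm, ← Finset.sum_add_distrib]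
  refine Finset.sum_congr rfl fun i _ => ?_
  rw [← Finset.sum_add_distrib]
  refine Eq.trans (sum_rot _ _ _ _) ?_
  refine Finset.sum_congr rfl fun s _ => ?_
  by_cases hc : s (Fin.last k) = g''
  · simp only [if_pos hc]
    have hA := Ainf Φ dA hΦadd hΦml hAinfty i i'' (f i (s 0).1 (s 0).2) (L Δ k s)
    rw [L_length] at hA
    exact hA
  · simp only [if_neg hc, Finset.sum_const_zero, add_zero]

include hΦadd hΦml hTypeD in
lemma step_lemma (f : ∀ i j, Q j → M i) (i'' : I) (g'' : Σ j : J, Q j) (k : ℕ) :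
    UB Φ Δ dA f i'' g'' k = UC Φ Δ f i'' g'' (k + 1) := by
  unfold UB UC
  simp only [Nat.add_sub_cancel]
  refine Finset.sum_congr rfl fun i _ => ?_
  -- LHS per i: rewrite the branch to the expanded (take/cons/drop + sum over g) form
  have hL : ∑ s : Fin (k + 1) → Σ j : J, Q j,
        (if s (Fin.last k) = g'' then
          ∑ t ∈ Finset.range k,
            Phi Φ i i'' (f i (s 0).1 (s 0).2) ((L Δ k s).set t (dA ((L Δ k s).getD t 0)))
        else 0)
      = ∑ s : Fin (k + 1) → Σ j : J, Q j,
        (if s (Fin.last k) = g'' then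
          ∑ t ∈ Finset.range k, ∑ g : Σ j : J, Q j,
            Phi Φ i i'' (f i (s 0).1 (s 0).2)
              ((L Δ k s).take t ++ (Dd Δ (nth k s t) g * Dd Δ g (nth k s (t + 1)))
                :: (L Δ k s).drop (t + 1))
        else 0) := by
    refine Finset.sum_congr rfl fun s _ => ?_
    by_cases hc : s (Fin.last k) = g''
    · simp only [if_pos hc]
      refine Finset.sum_congr rfl fun t ht => ?_
      rw [Finset.mem_range] at ht
      rw [L_getD_nth Δ k s t ht,
        Dd_d Δ dA hTypeD (nth k s t) (nth k s (t + 1)),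
        List.set_eq_take_cons_drop _ (by rw [L_length]; exact ht)]
      exact Phi_slot_sum Φ hΦadd hΦml _ _ i i'' _ _ _
    · simp only [if_neg hc]
  rw [hL]
  refine Eq.trans (push_if_sum k _ _) (Eq.trans ?_ (push_if_sum k _ _).symm)
  refine Finset.sum_congr rfl fun t ht => ?_
  rw [Finset.mem_range] at ht
  refine Eq.trans ?_ (sum_insert_reindex k t ht _).symm
  refine Finset.sum_congr rfl fun s _ => ?_
  rw [ite_sum_zero]
  refine Finset.sum_congr rfl fun g _ => ?_
  rw [ins_last k t ht s g, ins_zero k t ht s g, L_ins_take Δ k t ht s g,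
    L_ins_at Δ k t ht s g, L_ins_at1 Δ k t ht s g, L_ins_drop Δ k t ht s g]

end RowStep

section VanishSums

variable [Fintype I] [Fintype J] [∀ j, Fintype (Q j)]
variable (hΦadd : ∀ i i' h (x y : M i) as, Φ i i' h (x + y) as = Φ i i' h x as + Φ i i' h y as)
variable (hΦml : ∀ i i' h (x : M i) pre (a b : A) post,
      Φ i i' h x (pre ++ (a + b) :: post)
        = Φ i i' h x (pre ++ a :: post) + Φ i i' h x (pre ++ b :: post))

include hΦadd hΦml in
lemma rowvanish (N0 : ℕ)
    (hZ2 : ∀ n, N0 ≤ n → ∀ (s : Fin (n + 1) → Σ j : J, Q j) (i i' : I) (x : M i),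
      Phi Φ i i' x (L Δ n s) = 0)
    (f : ∀ i j, Q j → M i) (i'' : I) (g'' : Σ j : J, Q j) (m n : ℕ)
    (h : N0 ≤ m ∨ N0 ≤ n) :
    rowterm Φ Δ f i'' g'' (m + n) m = 0 := by
  unfold rowterm
  refine Finset.sum_eq_zero fun i _ => Finset.sum_eq_zero fun i' _ =>
    Finset.sum_eq_zero fun s _ => ?_
  rcases h with h | h
  · rw [L_take Δ m n s, hZ2 m h _ i i' _, Phi_zero Φ hΦadd hΦml i' i'']
    simp
  · rw [L_drop Δ m n s, hZ2 n h _ i' i'' _]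
    simp

lemma UC_zero (f : ∀ i j, Q j → M i) (i'' : I) (g'' : Σ j : J, Q j) :
    UC Φ Δ f i'' g'' 0 = 0 := by
  unfold UC
  refine Finset.sum_eq_zero fun i _ => Finset.sum_eq_zero fun s _ => ?_
  simp

lemma UC_top (N0 : ℕ)
    (hZM : ∀ (s : Fin (2 * N0 + 1) → Σ j : J, Q j) (t : ℕ), t + 2 ≤ 2 * N0 →
      ∀ (i i' : I) (x : M i),
        Phi Φ i i' x ((L Δ (2 * N0) s).take t
          ++ ((L Δ (2 * N0) s).getD t 0 * (L Δ (2 * N0) s).getD (t + 1) 0)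
          :: (L Δ (2 * N0) s).drop (t + 2)) = 0)
    (f : ∀ i j, Q j → M i) (i'' : I) (g'' : Σ j : J, Q j) :
    UC Φ Δ f i'' g'' (2 * N0) = 0 := by
  unfold UC
  refine Finset.sum_eq_zero fun i _ => Finset.sum_eq_zero fun s _ => ?_
  have hz : ∑ t ∈ Finset.range (2 * N0 - 1),
      Phi Φ i i'' (f i (s 0).1 (s 0).2)
        ((L Δ (2 * N0) s).take t
          ++ ((L Δ (2 * N0) s).getD t 0 * (L Δ (2 * N0) s).getD (t + 1) 0)
          :: (L Δ (2 * N0) s).drop (t + 2)) = 0 := by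
    refine Finset.sum_eq_zero fun t ht => ?_
    rw [Finset.mem_range] at ht
    exact hZM s t (by omega) i i'' _
  rw [hz]
  simp

end VanishSums


section Expand

variable [Fintype I] [Fintype J] [∀ j, Fintype (Q j)]
variable (hΦadd : ∀ i i' h (x y : M i) as, Φ i i' h (x + y) as = Φ i i' h x as + Φ i i' h y as)
variable (hΦml : ∀ i i' h (x : M i) pre (a b : A) post,
      Φ i i' h x (pre ++ (a + b) :: post)
        = Φ i i' h x (pre ++ a :: post) + Φ i i' h x (pre ++ b :: post))

include hΦadd hΦml in
lemma expand2 (N0 : ℕ)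
    (hZ2 : ∀ n, N0 ≤ n → ∀ (s : Fin (n + 1) → Σ j : J, Q j) (i i' : I) (x : M i),
      Phi Φ i i' x (L Δ n s) = 0)
    (Dtot : (∀ i j, Q j → M i) → (∀ i j, Q j → M i))
    (hDtot : ∀ f i' j' (q' : Q j'),
      Dtot f i' j' q' =
        ∑ i : I, if hi : i ≤ i' then
          ∑ᶠ n : ℕ,
            ∑ p : Fin (n + 1) → (Σ j : J, Q j),
              if hp : Monotone (fun t => (p t).1) ∧ p (Fin.last n) = ⟨j', q'⟩ then
                Φ i i' hi (f i (p 0).1 (p 0).2)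
                  (List.ofFn (fun t : Fin n =>
                    Δ (p t.castSucc).1 (p t.succ).1
                      (hp.1 (Fin.castSucc_lt_succ : t.castSucc < t.succ).le)
                      (p t.castSucc).2 (p t.succ).2))
              else 0
        else 0)
    (f : ∀ i j, Q j → M i) (i1 i'' : I) (g'' : Σ j : J, Q j) (n : ℕ) :
    Spath Φ Δ (Dtot f) i1 i'' g'' n
      = ∑ i0 : I, ∑ m ∈ Finset.range N0,
          ∑ r : Fin (m + 1) → Σ j : J, Q j, ∑ p : Fin (n + 1) → Σ j : J, Q j,
            if p (Fin.last n) = g'' ∧ r (Fin.last m) = p 0 then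
              Phi Φ i1 i'' (Phi Φ i0 i1 (f i0 (r 0).1 (r 0).2) (L Δ m r)) (L Δ n p)
            else 0 := by
  unfold Spath
  calc ∑ p : Fin (n + 1) → Σ j : J, Q j,
        (if p (Fin.last n) = g'' then
          Phi Φ i1 i'' (Dtot f i1 (p 0).1 (p 0).2) (L Δ n p) else 0)
      = ∑ p : Fin (n + 1) → Σ j : J, Q j, ∑ i0 : I, ∑ m ∈ Finset.range N0,
          ∑ r : Fin (m + 1) → Σ j : J, Q j,
            (if p (Fin.last n) = g'' ∧ r (Fin.last m) = p 0 then
              Phi Φ i1 i'' (Phi Φ i0 i1 (f i0 (r 0).1 (r 0).2) (L Δ m r)) (L Δ n p)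
            else 0) := by
        refine Finset.sum_congr rfl fun p _ => ?_
        by_cases hp : p (Fin.last n) = g''
        · rw [if_pos hp]
          rw [red Φ Δ hΦadd hΦml N0 hZ2 Dtot hDtot f i1 (p 0).1 (p 0).2, Sigma.eta]
          rw [Phi_sum Φ hΦadd hΦml i1 i'' Finset.univ _ (L Δ n p)]
          refine Finset.sum_congr rfl fun i0 _ => ?_
          rw [Phi_sum Φ hΦadd hΦml i1 i'' (Finset.range N0) _ (L Δ n p)]
          refine Finset.sum_congr rfl fun m _ => ?_
          unfold Spath
          rw [Phi_sum Φ hΦadd hΦml i1 i'' Finset.univ _ (L Δ n p)]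
          refine Finset.sum_congr rfl fun r _ => ?_
          rw [Phi_ite Φ hΦadd hΦml _ i1 i'' _ (L Δ n p)]
          simp only [hp, eq_self_iff_true, true_and]
        · rw [if_neg hp]
          symm
          refine Finset.sum_eq_zero fun i0 _ => Finset.sum_eq_zero fun m _ =>
            Finset.sum_eq_zero fun r _ => ?_
          exact if_neg (fun hc => hp hc.1)
    _ = ∑ i0 : I, ∑ m ∈ Finset.range N0,
          ∑ r : Fin (m + 1) → Σ j : J, Q j, ∑ p : Fin (n + 1) → Σ j : J, Q j,
            (if p (Fin.last n) = g'' ∧ r (Fin.last m) = p 0 then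
              Phi Φ i1 i'' (Phi Φ i0 i1 (f i0 (r 0).1 (r 0).2) (L Δ m r)) (L Δ n p)
            else 0) := by
        rw [Finset.sum_comm]
        refine Finset.sum_congr rfl fun i0 _ =>
          sum_rot3' Finset.univ (Finset.range N0) (fun m => Finset.univ)
            (fun (p : Fin (n + 1) → Σ j : J, Q j) (m : ℕ) (r : Fin (m + 1) → Σ j : J, Q j) =>
              if p (Fin.last n) = g'' ∧ r (Fin.last m) = p 0 then
                Phi Φ i1 i'' (Phi Φ i0 i1 (f i0 (r 0).1 (r 0).2) (L Δ m r)) (L Δ n p)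
              else 0)

end Expand

end BoxTensorAux

/-!
Statement 1 (the box tensor product of a filtered A∞-module and a filtered type D
structure is a filtered chain complex).

All objects are over `F₂ = ZMod 2`, and `A` is a dg algebra (differential `dA`
satisfying the Leibniz rule), which is in particular a bounded A∞-algebra over a
ground ring of characteristic 2.

The `I`-filtered A∞-module `M = ({M^i}, {F^{i<i'}})` is encoded in amalgamated form:
`Φ i i' h x as` (for `i ≤ i'`) is the map `M^i ⊗ A^{⊗ as.length} → M^{i'}`, where the
diagonal `Φ i i` collects the A∞ operations `m` of `M^i` and `Φ i i'` for `i < i'`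
collects the components of the morphism `F^{i<i'}`; the compatibility condition
`d(F^{i<k}) = ∑_{i<j<k} F^{j<k} ∘ F^{i<j}` is, as in the paper, equivalent to the
amalgamated maps satisfying the A∞-module structure equation `hAinfty`.

The `J`-filtered type D structure `P = ({P^j}, {h¹_{j<j'}})` is encoded via
distinguished generating sets `Q j` of the `P^j` and the amalgamated matrix
`Δ j j' h q q' ∈ A` of the structure maps `δ¹` (diagonal) and morphisms `h¹_{j<j'}`
(off-diagonal); the filtered compatibility condition is equivalent to the type D
structure equation `hTypeD` for the amalgamated matrix.

`Dtot` is the total endomorphism of `M ⊠ P = ⊕_{(i,j)∈I×J} M^i ⊗ P^j` whose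
`(i×j < i'×j')`-components are the structure maps `D^{i×j<i'×j'}`: by definition it
sums, over all monotone paths through the generators of the `P^j` ending at the output
generator, the operation feeding the algebra elements produced by iterating `δ` and
interleaving the `h¹_{j<j'}` into `F^{i≤i'}` (with `F^{i≤i} = m^i`).

Conclusion: `M ⊠ P`, with these structure maps, is an `I×J`-filtered chain complex:
the total map is a differential and it respects the filtration by lower sets of
`I × J`.
-/
theorem box_tensor_of_filtered_module_and_typeD_is_filtered_complex
    -- the dg algebra A over F₂
    (A : Type*) [Ring A] [Algebra (ZMod 2) A]
    (dA : A →ₗ[ZMod 2] A)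
    (hdA : ∀ a, dA (dA a) = 0)
    (hLeibniz : ∀ a b : A, dA (a * b) = dA a * b + a * dA b)
    -- finite posets
    {I J : Type*} [Fintype I] [PartialOrder I] [Fintype J] [PartialOrder J]
    -- the I-filtered A∞-module over A, in amalgamated form
    (M : I → Type*) [∀ i, AddCommGroup (M i)] [∀ i, Module (ZMod 2) (M i)]
    (Φ : ∀ i i' : I, i ≤ i' → M i → List A → M i')
    (hΦadd : ∀ i i' h (x y : M i) as, Φ i i' h (x + y) as = Φ i i' h x as + Φ i i' h y as)
    (hΦml : ∀ i i' h (x : M i) pre (a b : A) post,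
      Φ i i' h x (pre ++ (a + b) :: post)
        = Φ i i' h x (pre ++ a :: post) + Φ i i' h x (pre ++ b :: post))
    -- the filtered A∞-module structure equation (amalgamated form)
    (hAinfty : ∀ i i'' (h : i ≤ i'') (x : M i) (as : List A),
      (∑ i' : I, if h' : i ≤ i' ∧ i' ≤ i'' then
          ∑ t ∈ Finset.range (as.length + 1),
            Φ i' i'' h'.2 (Φ i i' h'.1 x (as.take t)) (as.drop t)
        else 0)
      + (∑ t ∈ Finset.range as.length,
          Φ i i'' h x (as.set t (dA (as.getD t 0))))
      + (∑ t ∈ Finset.range (as.length - 1),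
          Φ i i'' h x
            (as.take t ++ (as.getD t 0 * as.getD (t + 1) 0) :: as.drop (t + 2)))
      = 0)
    -- the J-filtered type D structure over A, via generating sets and the
    -- amalgamated structure matrix Δ
    (Q : J → Type*) [∀ j, Fintype (Q j)]
    (Δ : ∀ j j' : J, j ≤ j' → Q j → Q j' → A)
    -- the filtered type D structure equation (amalgamated form)
    (hTypeD : ∀ j j'' (h : j ≤ j'') (q : Q j) (r : Q j''),
      dA (Δ j j'' h q r)
        + ∑ j' : J, (if h' : j ≤ j' ∧ j' ≤ j'' then
            ∑ p : Q j', Δ j j' h'.1 q p * Δ j' j'' h'.2 p r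
          else 0)
      = 0)
    -- at least one of M, P is bounded (so that M ⊠ P is defined):
    -- either all sufficiently long operations of M vanish, or all sufficiently long
    -- iterates of the structure maps of P vanish
    (hbounded :
      (∃ N, ∀ i i' h (x : M i) (as : List A), N ≤ as.length → Φ i i' h x as = 0) ∨
      (∃ N, ∀ n, N ≤ n → ∀ js : Fin (n + 1) → J, ∀ hm : Monotone js,
        ∀ qs : ∀ t, Q (js t), ∃ t : Fin n,
          Δ (js t.castSucc) (js t.succ) (hm (Fin.castSucc_lt_succ : t.castSucc < t.succ).le)
            (qs t.castSucc) (qs t.succ) = 0))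
    -- the total endomorphism of M ⊠ P = ⊕_{(i,j)} M^i ⊗ P^j, whose components are
    -- the structure maps D^{i×j < i'×j'} of the box tensor product
    (Dtot : (∀ i j, Q j → M i) → (∀ i j, Q j → M i))
    (hDtot : ∀ f i' j' (q' : Q j'),
      Dtot f i' j' q' =
        ∑ i : I, if hi : i ≤ i' then
          ∑ᶠ n : ℕ,
            ∑ p : Fin (n + 1) → (Σ j : J, Q j),
              if hp : Monotone (fun t => (p t).1) ∧ p (Fin.last n) = ⟨j', q'⟩ then
                Φ i i' hi (f i (p 0).1 (p 0).2)
                  (List.ofFn (fun t : Fin n =>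
                    Δ (p t.castSucc).1 (p t.succ).1
                      (hp.1 (Fin.castSucc_lt_succ : t.castSucc < t.succ).le)
                      (p t.castSucc).2 (p t.succ).2))
              else 0
        else 0) :
    -- conclusion: M ⊠ P is naturally an I×J-filtered chain complex:
    -- the total structure map is a differential …
    (∀ f, Dtot (Dtot f) = 0) ∧
    -- … respecting the filtration by the poset I × J
    (∀ S : Set (I × J), IsLowerSet S →
      ∀ f : ∀ i j, Q j → M i, (∀ i j, (i, j) ∈ S → f i j = 0) →
        ∀ i j, (i, j) ∈ S → Dtot f i j = 0) := by
  
  open BoxTensorAux in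
  constructor
  · intro f
    funext i'' j'' q''
    show Dtot (Dtot f) i'' j'' q'' = 0
    obtain ⟨N0, hN0pos, hZ2, hZM⟩ := zlems Φ Δ hΦadd hΦml hbounded
    rw [red Φ Δ hΦadd hΦml N0 hZ2 Dtot hDtot (Dtot f) i'' j'' q'']
    set g'' : Σ j : J, Q j := ⟨j'', q''⟩ with hgdef
    rw [Finset.sum_congr rfl (fun i1 _ => Finset.sum_congr rfl (fun n _ =>
      expand2 Φ Δ hΦadd hΦml N0 hZ2 Dtot hDtot f i1 i'' g'' n))]
    rw [Finset.sum_congr rfl (fun i1 _ => Finset.sum_congr rfl (fun n _ =>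
      Finset.sum_congr rfl (fun i0 _ => Finset.sum_congr rfl (fun m _ =>
        splice_inst Φ Δ f i0 i1 i'' g'' m n))))]
    refine Eq.trans (sum_perm4 Finset.univ (Finset.range N0) Finset.univ (Finset.range N0)
      (fun (i1 : I) (n : ℕ) (i0 : I) (m : ℕ) =>
        ∑ s : Fin (m + n + 1) → Σ j : J, Q j,
          if s (Fin.last (m + n)) = g'' then
            Phi Φ i1 i''
              (Phi Φ i0 i1 (f i0 (s 0).1 (s 0).2) ((L Δ (m + n) s).take m))
              ((L Δ (m + n) s).drop m)
          else 0)) ?_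
    show ∑ m ∈ Finset.range N0, ∑ n ∈ Finset.range N0,
        rowterm Φ Δ f i'' g'' (m + n) m = 0
    rw [← Finset.sum_product']
    have hs1 : Finset.range N0 ×ˢ Finset.range N0
        ⊆ Finset.range (2 * N0) ×ˢ Finset.range (2 * N0) :=
      Finset.product_subset_product (Finset.range_subset_range.mpr (by omega))
        (Finset.range_subset_range.mpr (by omega))
    rw [Finset.sum_subset hs1 (fun x hx hnx => by
      rw [Finset.mem_product, Finset.mem_range, Finset.mem_range] at hnx
      push_neg at hnx
      rw [Finset.mem_product, Finset.mem_range, Finset.mem_range] at hx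
      refine rowvanish Φ Δ hΦadd hΦml N0 hZ2 f i'' g'' x.1 x.2 ?_
      by_cases h1 : x.1 < N0
      · exact Or.inr (hnx h1)
      · exact Or.inl (by omega))]
    rw [← Finset.sum_subset
      (Finset.filter_subset (fun x : ℕ × ℕ => x.1 + x.2 < 2 * N0)
        (Finset.range (2 * N0) ×ˢ Finset.range (2 * N0)))
      (fun x hx hnx => by
        rw [Finset.mem_filter] at hnx
        push_neg at hnx
        have h2 := hnx hx
        refine rowvanish Φ Δ hΦadd hΦml N0 hZ2 f i'' g'' x.1 x.2 (by omega))]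
    have hbij : ∑ x ∈ (Finset.range (2 * N0) ×ˢ Finset.range (2 * N0)).filter
          (fun x : ℕ × ℕ => x.1 + x.2 < 2 * N0),
        rowterm Φ Δ f i'' g'' (x.1 + x.2) x.1
        = ∑ y ∈ (Finset.range (2 * N0)).sigma (fun k => Finset.range (k + 1)),
            rowterm Φ Δ f i'' g'' y.1 y.2 := by
      refine Finset.sum_bij' (fun x _ => (⟨x.1 + x.2, x.1⟩ : Σ _ : ℕ, ℕ))
        (fun y _ => ((y.2, y.1 - y.2) : ℕ × ℕ)) ?_ ?_ ?_ ?_ ?_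
      · intro x hx
        rw [Finset.mem_filter, Finset.mem_product, Finset.mem_range, Finset.mem_range] at hx
        rw [Finset.mem_sigma, Finset.mem_range, Finset.mem_range]
        exact ⟨(show x.1 + x.2 < 2 * N0 by omega), (show x.1 < x.1 + x.2 + 1 by omega)⟩
      · intro y hy
        rw [Finset.mem_sigma, Finset.mem_range, Finset.mem_range] at hy
        rw [Finset.mem_filter, Finset.mem_product, Finset.mem_range, Finset.mem_range]
        exact ⟨⟨(show y.2 < 2 * N0 by omega), (show y.1 - y.2 < 2 * N0 by omega)⟩,
          (show y.2 + (y.1 - y.2) < 2 * N0 by omega)⟩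
      · intro x hx
        exact Prod.ext rfl (show x.1 + x.2 - x.1 = x.2 by omega)
      · intro y hy
        rw [Finset.mem_sigma, Finset.mem_range, Finset.mem_range] at hy
        exact Sigma.ext (show y.2 + (y.1 - y.2) = y.1 by omega) (heq_of_eq rfl)
      · intro x hx
        rfl
    rw [hbij, ← Finset.sum_sigma']
    rw [Finset.sum_congr rfl (fun k (_ : k ∈ Finset.range (2 * N0)) =>
      row_split Φ Δ dA hΦadd hΦml hAinfty f i'' g'' k)]
    rw [Finset.sum_congr rfl (fun k (_ : k ∈ Finset.range (2 * N0)) => by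
      rw [step_lemma Φ Δ dA hΦadd hΦml hTypeD f i'' g'' k])]
    rw [telescope2 (fun k => UC Φ Δ f i'' g'' k) (2 * N0)]
    rw [show UC Φ Δ f i'' g'' (2 * N0) = 0 from UC_top Φ Δ N0 hZM f i'' g'',
      UC_zero Φ Δ f i'' g'']
    simp
  · intro S hS f hf i j hij
    funext q'
    show Dtot f i j q' = 0
    rw [hDtot]
    refine Finset.sum_eq_zero fun i0 _ => ?_
    split
    case isTrue hi =>
      have hzero : ∀ n : ℕ,
          (∑ p : Fin (n + 1) → Σ j' : J, Q j',
            if hp : Monotone (fun t => (p t).1) ∧ p (Fin.last n) = ⟨j, q'⟩ then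
              Φ i0 i hi (f i0 (p 0).1 (p 0).2)
                (List.ofFn (fun t : Fin n =>
                  Δ (p t.castSucc).1 (p t.succ).1
                    (hp.1 (Fin.castSucc_lt_succ : t.castSucc < t.succ).le)
                    (p t.castSucc).2 (p t.succ).2))
            else 0) = 0 := by
        intro n
        refine Finset.sum_eq_zero fun p _ => ?_
        split
        case isTrue hp =>
          have hj : (p 0).1 ≤ j := by
            have hmono : (p 0).1 ≤ (p (Fin.last n)).1 := hp.1 (Fin.zero_le _)
            have hlast : (p (Fin.last n)).1 = j := congrArg Sigma.fst hp.2
            rw [hlast] at hmono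
            exact hmono
          have hmemS : (i0, (p 0).1) ∈ S := hS (Prod.mk_le_mk.mpr ⟨hi, hj⟩) hij
          rw [hf i0 (p 0).1 hmemS]
          exact Phiraw_zero Φ hΦadd hΦml i0 i hi _
        case isFalse => rfl
      rw [finsum_congr hzero, finsum_zero]
    case isFalse => rfl
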